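/- For the hypothesis class H'_{≤n} = {h_p : p prime, p ≤ n}, the VC-dimension equals ⌊log₂ π(n)⌋, where π(n) is the number of primes ≤ n. -/

import Mathlib

/-- `hp p x` is the hypothesis `h_p` : it is `false` iff `p ∣ x` and `p < x`. -/
def hp (p x : ℕ) : Bool := !(p ∣ x ∧ p < x : Bool)

/-- The class `H'_{≤ n} = {h_p : p prime, p ≤ n}` shatters the finite set `C ⊆ {2,3,…}`. -/
def ShattersPrimesLe (n : ℕ) (C : Finset ℕ) : Prop :=
  ∀ f : ℕ → Bool, ∃ p : ℕ, p.Prime ∧ p ≤ n ∧ ∀ c ∈ C, hp p c = f c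

lemma pc_eq (n : ℕ) : Nat.primeCounting n = ((Finset.range (n+1)).filter Nat.Prime).card := by
  rw [Nat.primeCounting, Nat.primeCounting', Nat.count_eq_card_filter_range]

lemma pc_pos (n : ℕ) (hn : 2 ≤ n) : 0 < Nat.primeCounting n := by
  rw [pc_eq]
  refine Finset.card_pos.mpr ⟨2, ?_⟩
  simp [Finset.mem_filter, Nat.lt_succ_iff, hn, Nat.prime_two]

lemma hp_false {p x : ℕ} (h1 : p ∣ x) (h2 : p < x) : hp p x = false := by
  simp [hp, h1, h2]

lemma hp_true {p x : ℕ} (h1 : ¬ p ∣ x) : hp p x = true := by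
  simp [hp]; tauto

lemma upper (n : ℕ) (hn : 2 ≤ n) (C : Finset ℕ) (hs : ShattersPrimesLe n C) :
    C.card ≤ Nat.log 2 (Nat.primeCounting n) := by
  have hch : ∀ T : Finset ℕ, ∃ p, p.Prime ∧ p ≤ n ∧ ∀ c ∈ C, hp p c = decide (c ∈ T) :=
    fun T => hs (fun x => decide (x ∈ T))
  choose q hq1 hq2 hq3 using hch
  have hcard : 2 ^ C.card ≤ Nat.primeCounting n := by
    rw [pc_eq, ← Finset.card_powerset]
    refine Finset.card_le_card_of_injOn q ?_ ?_
    · intro T _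
      simp only [Finset.mem_coe, Finset.mem_filter, Finset.mem_range, Nat.lt_succ_iff]
      exact ⟨hq2 T, hq1 T⟩
    · intro T hT T' hT' h
      simp only [Finset.coe_powerset, Set.mem_preimage, Set.mem_powerset_iff,
        Finset.coe_subset] at hT hT'
      ext x
      by_cases hx : x ∈ C
      · have := (hq3 T x hx).symm.trans (h ▸ hq3 T' x hx)
        simpa using this
      · exact iff_of_false (fun hc => hx (hT hc)) (fun hc => hx (hT' hc))
  exact (Nat.le_log_iff_pow_le one_lt_two (pc_pos n hn).ne').mpr hcard

/-- `VCdim(H'_{≤ n}) = ⌊log₂ π(n)⌋`: some set of `≥ 2`-integers of that size is shattered,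
and no larger set is shattered. -/
theorem stmt5 (n : ℕ) (hn : 2 ≤ n) :
    (∃ C : Finset ℕ, C.card = Nat.log 2 (Nat.primeCounting n) ∧ (∀ x ∈ C, 2 ≤ x) ∧
        ShattersPrimesLe n C) ∧
      ∀ C : Finset ℕ, (∀ x ∈ C, 2 ≤ x) → ShattersPrimesLe n C →
        C.card ≤ Nat.log 2 (Nat.primeCounting n) := by
  refine ⟨?_, fun C _ hs => upper n hn C hs⟩
  set d := Nat.log 2 (Nat.primeCounting n) with hd
  set S := (Finset.range (n+1)).filter Nat.Prime with hS
  have h2d : 2 ^ d ≤ S.card := by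
    rw [← pc_eq]
    exact Nat.pow_log_le_self 2 (pc_pos n hn).ne'
  have hcards : Fintype.card (Fin d → Bool) ≤ Fintype.card ↥S := by
    simpa [Fintype.card_coe] using h2d
  obtain ⟨e⟩ : Nonempty ((Fin d → Bool) ↪ ↥S) :=
    Function.Embedding.nonempty_of_card_le hcards
  set q : (Fin d → Bool) → ℕ := fun g => (e g : ℕ) with hq
  have hqS : ∀ g, q g ∈ S := fun g => (e g).2
  have hq_prime : ∀ g, (q g).Prime := fun g => (Finset.mem_filter.mp (hqS g)).2
  have hq_le : ∀ g, q g ≤ n := fun g =>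
    Nat.lt_succ_iff.mp (Finset.mem_range.mp (Finset.mem_filter.mp (hqS g)).1)
  have hq_inj : Function.Injective q := fun g g' h => e.injective (Subtype.ext h)
  set c : Fin d → ℕ := fun i =>
    ∏ g ∈ Finset.univ.filter (fun g : Fin d → Bool => g i = false), (q g) ^ 2 with hc
  have hcpos : ∀ i, 0 < c i := fun i =>
    Finset.prod_pos (fun g _ => pow_pos (hq_prime g).pos 2)
  have hdvd : ∀ i g, g i = false → (q g) ^ 2 ∣ c i := fun i g h =>
    Finset.dvd_prod_of_mem _ (by simp [h])
  have hndvd : ∀ i g, g i = true → ¬ q g ∣ c i := by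
    intro i g h hdv
    rw [hc] at hdv
    obtain ⟨g', hg', hdg'⟩ := ((hq_prime g).prime.dvd_finset_prod_iff _).mp hdv
    have : q g = q g' :=
      (Nat.prime_dvd_prime_iff_eq (hq_prime g) (hq_prime g')).mp
        ((hq_prime g).dvd_of_dvd_pow hdg')
    have := hq_inj this
    subst this
    simp [h] at hg'
  have hp_of_false : ∀ i g, g i = false → hp (q g) (c i) = false := by
    intro i g h
    have h1 : q g ∣ c i := dvd_trans (dvd_pow_self _ two_ne_zero) (hdvd i g h)
    have h2 : q g < c i := by
      have hle : q g ^ 2 ≤ c i := Nat.le_of_dvd (hcpos i) (hdvd i g h)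
      have : q g < q g ^ 2 := by
        nlinarith [(hq_prime g).two_le]
      omega
    exact hp_false h1 h2
  have hp_of_true : ∀ i g, g i = true → hp (q g) (c i) = true := fun i g h =>
    hp_true (hndvd i g h)
  have hc_inj : Function.Injective c := by
    intro i i' hii
    by_contra hne
    set g0 : Fin d → Bool := fun k => decide (k = i) with hg0
    have h1 : ¬ q g0 ∣ c i := hndvd i g0 (by simp [hg0])
    have h2 : q g0 ∣ c i' := by
      refine dvd_trans (dvd_pow_self _ two_ne_zero) (hdvd i' g0 ?_)
      simp [hg0, Ne.symm hne]
    rw [← hii] at h2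
    exact h1 h2
  refine ⟨Finset.image c Finset.univ, ?_, ?_, ?_⟩
  · rw [Finset.card_image_of_injective _ hc_inj, Finset.card_univ, Fintype.card_fin]
  · intro x hx
    obtain ⟨i, _, rfl⟩ := Finset.mem_image.mp hx
    exact (hq_prime (fun _ => false)).two_le.trans
      (Nat.le_of_dvd (hcpos i)
        (dvd_trans (dvd_pow_self _ two_ne_zero) (hdvd i (fun _ => false) rfl)))
  · intro f
    set g : Fin d → Bool := fun i => f (c i) with hg
    refine ⟨q g, hq_prime g, hq_le g, ?_⟩
    intro x hx
    obtain ⟨i, _, rfl⟩ := Finset.mem_image.mp hx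
    rcases hfi : f (c i) with _ | _
    · exact hp_of_false i g (by simp [hg, hfi])
    · exact hp_of_true i g (by simp [hg, hfi])
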